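/- Let η, l₁ > 0, D ≥ 0, and α > D. Let d : ℝ → ℝ be twice differentiable with |d''(t)| ≤ D for all t ≥ 0, and let e : ℝ → ℝ be twice differentiable such that, with s(t) = (1 + η·l₁)·e'(t) + l₁·e(t), one has (1 + η·l₁)·e''(t) = −l₁·e'(t) − 2·α·sgn(s(t)) + d''(t) for all t ≥ 0. Then e(t) → 0 and e'(t) → 0 as t → ∞. -/

import Mathlib

/-- Reaching lemma: if `f 0 > 0` and `deriv f ≤ -α` whenever `f > 0` (for `t ≥ 0`),
then `f` has a zero at some nonnegative time. -/
lemma reach_aux (f : ℝ → ℝ) (α : ℝ) (hαpos : 0 < α) (hf : Differentiable ℝ f)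
    (hder : ∀ t : ℝ, 0 ≤ t → 0 < f t → deriv f t ≤ -α) (h0 : 0 < f 0) :
    ∃ T : ℝ, 0 ≤ T ∧ f T = 0 := by
  by_contra h
  push_neg at h
  set t₁ : ℝ := f 0 / α with ht₁
  have ht₁pos : 0 < t₁ := div_pos h0 hαpos
  -- f is positive on [0, t₁]
  have hpos : ∀ t ∈ Set.Icc (0:ℝ) t₁, 0 < f t := by
    intro t ht
    rcases lt_trichotomy (f t) 0 with hneg | hzero | hp
    · -- IVT gives a zero between 0 and t
      have hsub : Set.Icc (f t) (f 0) ⊆ f '' Set.Icc 0 t :=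
        intermediate_value_Icc' ht.1 hf.continuous.continuousOn
      have : (0:ℝ) ∈ Set.Icc (f t) (f 0) := ⟨hneg.le, h0.le⟩
      obtain ⟨z, hz, hz0⟩ := hsub this
      exact absurd hz0 (h z hz.1)
    · exact absurd hzero (h t ht.1)
    · exact hp
  -- g = f + α·t is antitone on [0, t₁]
  have hgdiff : Differentiable ℝ (fun t => f t + α * t) :=
    hf.add (differentiable_id.const_mul α)
  have hg' : ∀ x : ℝ, deriv (fun t => f t + α * t) x = deriv f x + α := by
    intro x
    have h1 : HasDerivAt (fun t : ℝ => f t + α * t) (deriv f x + α * 1) x :=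
      (hf x).hasDerivAt.add ((hasDerivAt_id x).const_mul α)
    simpa using h1.deriv
  have hg : AntitoneOn (fun t => f t + α * t) (Set.Icc 0 t₁) := by
    apply antitoneOn_of_deriv_nonpos (convex_Icc 0 t₁)
      hgdiff.continuous.continuousOn
      (fun x hx => (hgdiff x).differentiableWithinAt)
    intro x hx
    rw [interior_Icc] at hx
    have hx0 : 0 ≤ x := hx.1.le
    have hfx : 0 < f x := hpos x ⟨hx.1.le, hx.2.le⟩
    have hd := hder x hx0 hfx
    rw [hg' x]; linarith
  have h1 : f t₁ + α * t₁ ≤ f 0 + α * 0 :=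
    hg ⟨le_refl 0, ht₁pos.le⟩ ⟨ht₁pos.le, le_refl t₁⟩ ht₁pos.le
  have h2 : 0 < f t₁ := hpos t₁ ⟨ht₁pos.le, le_refl t₁⟩
  have : α * t₁ = f 0 := by rw [ht₁, mul_div_cancel₀ _ hαpos.ne']
  linarith

/-- Trajectory-level form of Theorem 2 (stability of the SLDO): with
s = (1 + ηl₁)ė + l₁e, closed-loop dynamics
(1 + ηl₁)ë = −l₁ė − 2α·sgn(s) + d̈, η, l₁ > 0, |d̈| ≤ D and α > D,
the estimation error satisfies e(t) → 0 and ė(t) → 0 as t → ∞. -/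
theorem stmt_17 (η l₁ D α : ℝ) (hη : 0 < η) (hl₁ : 0 < l₁) (hD : 0 ≤ D)
    (hα : D < α) (d : ℝ → ℝ)
    (hd : Differentiable ℝ d) (hd' : Differentiable ℝ (deriv d))
    (hdbdd : ∀ t : ℝ, 0 ≤ t → |deriv (deriv d) t| ≤ D)
    (e : ℝ → ℝ) (he : Differentiable ℝ e) (he' : Differentiable ℝ (deriv e))
    (heq : ∀ t : ℝ, 0 ≤ t →
      (1 + η * l₁) * deriv (deriv e) t =
        -l₁ * deriv e t -
          2 * α * Real.sign ((1 + η * l₁) * deriv e t + l₁ * e t) +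
          deriv (deriv d) t) :
    Filter.Tendsto e Filter.atTop (nhds 0) ∧
    Filter.Tendsto (deriv e) Filter.atTop (nhds 0) := by
  have hαpos : 0 < α := lt_of_le_of_lt hD hα
  set c : ℝ := 1 + η * l₁ with hc
  have hcpos : 0 < c := by positivity
  set s : ℝ → ℝ := fun t => c * deriv e t + l₁ * e t with hs
  have hsdiff : Differentiable ℝ s := (he'.const_mul c).add (he.const_mul l₁)
  have hderivs : ∀ t : ℝ, deriv s t = c * deriv (deriv e) t + l₁ * deriv e t := by
    intro t
    rw [hs, deriv_fun_add ((he' t).const_mul c) ((he t).const_mul l₁),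
      deriv_const_mul c (he' t), deriv_const_mul l₁ (he t)]
  have hseq : ∀ t : ℝ, 0 ≤ t →
      deriv s t = -(2 * α) * Real.sign (s t) + deriv (deriv d) t := by
    intro t ht
    have := heq t ht
    rw [hderivs t]
    simp only [hs]
    linarith
  -- derivative bounds
  have hpos_bd : ∀ t : ℝ, 0 ≤ t → 0 < s t → deriv s t ≤ -α := by
    intro t ht hst
    rw [hseq t ht, Real.sign_of_pos hst]
    have h1 := (abs_le.mp (hdbdd t ht)).2
    linarith
  have hneg_bd : ∀ t : ℝ, 0 ≤ t → s t < 0 → α ≤ deriv s t := by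
    intro t ht hst
    rw [hseq t ht, Real.sign_of_neg hst]
    have h1 := (abs_le.mp (hdbdd t ht)).1
    linarith
  -- V = s² is antitone on [0, ∞)
  have hV : AntitoneOn (fun t => s t * s t) (Set.Ici (0:ℝ)) := by
    apply antitoneOn_of_deriv_nonpos (convex_Ici 0)
      ((hsdiff.continuous.mul hsdiff.continuous).continuousOn)
      (fun x hx => ((hsdiff x).mul (hsdiff x)).differentiableWithinAt)
    intro x hx
    rw [interior_Ici] at hx
    have hx0 : (0:ℝ) ≤ x := hx.le
    rw [deriv_mul (hsdiff x) (hsdiff x)]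
    rcases lt_trichotomy (s x) 0 with h | h | h
    · have := hneg_bd x hx0 h
      nlinarith
    · rw [h]; ring_nf; simp [h]
    · have := hpos_bd x hx0 h
      nlinarith
  -- once s hits zero it stays zero
  have hstay : ∀ t₀ : ℝ, 0 ≤ t₀ → s t₀ = 0 → ∀ t : ℝ, t₀ ≤ t → s t = 0 := by
    intro t₀ ht₀ hs0 t ht
    have h1 : s t * s t ≤ s t₀ * s t₀ :=
      hV (Set.mem_Ici.mpr ht₀) (Set.mem_Ici.mpr (ht₀.trans ht)) ht
    rw [hs0] at h1
    nlinarith [mul_self_nonneg (s t)]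
  -- reaching: s has a zero at some nonnegative time
  have hreach : ∃ T : ℝ, 0 ≤ T ∧ s T = 0 := by
    rcases lt_trichotomy (s 0) 0 with h | h | h
    · obtain ⟨T, hT0, hT⟩ := reach_aux (fun t => -s t) α hαpos hsdiff.neg
        (fun t ht hpt => by
          have hpt' : 0 < -s t := hpt
          rw [deriv.fun_neg]
          have hst : s t < 0 := by linarith
          linarith [hneg_bd t ht hst]) (by simpa using h)
      exact ⟨T, hT0, by linarith [hT]⟩
    · exact ⟨0, le_refl 0, h⟩
    · exact reach_aux s α hαpos hsdiff hpos_bd h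
  obtain ⟨T, hT0, hTzero⟩ := hreach
  have hszero : ∀ t : ℝ, T ≤ t → s t = 0 := hstay T hT0 hTzero
  -- on [T, ∞), c·e' + l₁·e = 0 hence e' = -k·e with k = l₁/c
  set k : ℝ := l₁ / c with hk
  have hkpos : 0 < k := div_pos hl₁ hcpos
  have hode : ∀ t : ℝ, T ≤ t → deriv e t = -k * e t := by
    intro t ht
    have := hszero t ht
    simp only [hs] at this
    have hk' : k * c = l₁ := by rw [hk]; exact div_mul_cancel₀ l₁ hcpos.ne'
    have h2 : c * (deriv e t + k * e t) = 0 := by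
      rw [mul_add, ← mul_assoc, mul_comm c k, hk']; linarith
    rcases mul_eq_zero.mp h2 with h | h
    · linarith
    · linarith
  -- f = e · exp(k·t) is constant on [T, ∞)
  set f : ℝ → ℝ := fun t => e t * Real.exp (k * t) with hf
  have hfd : Differentiable ℝ f :=
    he.mul ((Real.differentiable_exp.comp ((differentiable_const k).mul differentiable_id)))
  have hfderiv : ∀ t : ℝ, T ≤ t → deriv f t = 0 := by
    intro t ht
    have hexp : HasDerivAt (fun t : ℝ => Real.exp (k * t)) (Real.exp (k * t) * k) t := by
      have h1 : HasDerivAt (fun u : ℝ => k * u) (k * 1) t := (hasDerivAt_id t).const_mul k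
      simpa using h1.exp
    have hee : HasDerivAt e (deriv e t) t := (he t).hasDerivAt
    have := (hee.mul hexp).deriv
    change deriv (fun t => e t * Real.exp (k * t)) t = _ at this
    rw [hf, this, hode t ht]
    ring
  have hconst : ∀ t : ℝ, T ≤ t → f t = f T := by
    intro t ht
    have hmono : AntitoneOn f (Set.Ici T) := by
      apply antitoneOn_of_deriv_nonpos (convex_Ici T) hfd.continuous.continuousOn
        (fun x hx => (hfd x).differentiableWithinAt)
      intro x hx
      rw [interior_Ici] at hx
      rw [hfderiv x hx.le]
    have hmono2 : MonotoneOn f (Set.Ici T) := by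
      apply monotoneOn_of_deriv_nonneg (convex_Ici T) hfd.continuous.continuousOn
        (fun x hx => (hfd x).differentiableWithinAt)
      intro x hx
      rw [interior_Ici] at hx
      rw [hfderiv x hx.le]
    exact le_antisymm (hmono (Set.mem_Ici.mpr (le_refl T)) (Set.mem_Ici.mpr ht) ht)
      (hmono2 (Set.mem_Ici.mpr (le_refl T)) (Set.mem_Ici.mpr ht) ht)
  -- explicit formula e t = f T · exp (-(k·t)) for t ≥ T
  have hformula : ∀ t : ℝ, T ≤ t → e t = f T * Real.exp (-(k * t)) := by
    intro t ht
    have h2 : e t * Real.exp (k * t) = f T := hconst t ht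
    have h1 : Real.exp (k * t) * Real.exp (-(k * t)) = 1 := by
      rw [← Real.exp_add]; simp
    calc e t = e t * (Real.exp (k * t) * Real.exp (-(k * t))) := by rw [h1, mul_one]
      _ = (e t * Real.exp (k * t)) * Real.exp (-(k * t)) := by ring
      _ = f T * Real.exp (-(k * t)) := by rw [h2]
  -- the exponential tends to 0
  have hexp0 : Filter.Tendsto (fun t : ℝ => f T * Real.exp (-(k * t)))
      Filter.atTop (nhds 0) := by
    have h1 : Filter.Tendsto (fun t : ℝ => k * t) Filter.atTop Filter.atTop :=
      Filter.Tendsto.const_mul_atTop hkpos Filter.tendsto_id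
    have h2 : Filter.Tendsto (fun t : ℝ => -(k * t)) Filter.atTop Filter.atBot :=
      Filter.tendsto_neg_atBot_iff.mpr h1
    have h3 : Filter.Tendsto (fun t : ℝ => Real.exp (-(k * t))) Filter.atTop (nhds 0) :=
      Real.tendsto_exp_atBot.comp h2
    simpa using h3.const_mul (f T)
  have hetend : Filter.Tendsto e Filter.atTop (nhds 0) := by
    apply hexp0.congr'
    filter_upwards [Filter.eventually_ge_atTop T] with t ht
    exact (hformula t ht).symm
  refine ⟨hetend, ?_⟩
  have : Filter.Tendsto (fun t => -k * e t) Filter.atTop (nhds 0) := by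
    simpa using hetend.const_mul (-k)
  apply this.congr'
  filter_upwards [Filter.eventually_ge_atTop T] with t ht
  exact (hode t ht).symm
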